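/- arXiv:2409.12066 — 2 statements merged into one kernel-verified Lean document; each statement's English description precedes it below -/
import Mathlib

section
/- For a nonzero positive semidefinite real symmetric m×m matrix Ω, define d = trace(Ω)² / trace(Ω²) and d* = trace(Ω²)³ / trace(Ω³)². Then 1 ≤ d* ≤ d ≤ m. -/
open Matrix

lemma aux_trace_pow {m : ℕ} {A : Matrix (Fin m) (Fin m) ℝ} (hA : A.IsHermitian) (k : ℕ) :
    (A ^ k).trace = ∑ i, hA.eigenvalues i ^ k := by
  set U : Matrix (Fin m) (Fin m) ℝ := (hA.eigenvectorUnitary : Matrix (Fin m) (Fin m) ℝ)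
  have hU1 : star U * U = 1 := (Matrix.mem_unitaryGroup_iff').mp hA.eigenvectorUnitary.2
  have hU2 : U * star U = 1 := (Matrix.mem_unitaryGroup_iff).mp hA.eigenvectorUnitary.2
  set D : Matrix (Fin m) (Fin m) ℝ := diagonal (RCLike.ofReal ∘ hA.eigenvalues)
  have hpow : A ^ k = U * D ^ k * star U := by
    induction k with
    | zero => simpa using hU2.symm
    | succ n ih =>
      have hAeq : A = U * D * star U := hA.spectral_theorem
      rw [pow_succ, ih, hAeq]
      have h1 : U * D ^ n * star U * (U * D * star U)
          = U * D ^ n * (star U * U) * (D * star U) := by simp only [mul_assoc]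
      rw [h1, hU1, mul_one, pow_succ]
      simp only [mul_assoc]
  rw [hpow, trace_mul_cycle, hU1, one_mul, diagonal_pow, trace_diagonal]
  simp [Function.comp]

/-- For a nonzero positive semidefinite real symmetric `m × m` matrix `Ω`,
with `d = trace(Ω)² / trace(Ω²)` and `d* = trace(Ω²)³ / trace(Ω³)²`, one has
`1 ≤ d* ≤ d ≤ m`. -/
theorem stmt_5 {m : ℕ} (Ω : Matrix (Fin m) (Fin m) ℝ) (hΩ : Ω.PosSemidef) (hne : Ω ≠ 0)
    (d dstar : ℝ)
    (hd : d = (Ω.trace) ^ 2 / (Ω ^ 2).trace)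
    (hdstar : dstar = ((Ω ^ 2).trace) ^ 3 / ((Ω ^ 3).trace) ^ 2) :
    1 ≤ dstar ∧ dstar ≤ d ∧ d ≤ (m : ℝ) := by
  have hH := hΩ.1
  set ev := hH.eigenvalues with hev
  have hnn : ∀ i, 0 ≤ ev i := fun i => hΩ.eigenvalues_nonneg i
  have htr1 : Ω.trace = ∑ i, ev i := by
    have := aux_trace_pow hH 1
    simpa using this
  have htr2 : (Ω ^ 2).trace = ∑ i, ev i ^ 2 := aux_trace_pow hH 2
  have htr3 : (Ω ^ 3).trace = ∑ i, ev i ^ 3 := aux_trace_pow hH 3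
  -- some eigenvalue is positive
  obtain ⟨v, t, ht, hv, hAv⟩ := hH.exists_eigenvector_of_ne_zero hne
  have hex : ∃ j, 0 < ev j := by
    by_contra h
    push_neg at h
    have hz : ∀ j, ev j = 0 := fun j => le_antisymm (h j) (hnn j)
    have : Ω = 0 := by
      have hst := hH.spectral_theorem
      rw [show (RCLike.ofReal ∘ ev : Fin m → ℝ) = fun _ => 0 from funext fun j => by simp [hz j],
        Matrix.diagonal_zero, map_zero] at hst
      exact hst
    exact hne this
  obtain ⟨j, hj⟩ := hex
  set S1 := ∑ i, ev i with hS1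
  set S2 := ∑ i, ev i ^ 2 with hS2
  set S3 := ∑ i, ev i ^ 3 with hS3
  have hS1pos : 0 < S1 :=
    Finset.sum_pos' (fun i _ => hnn i) ⟨j, Finset.mem_univ j, hj⟩
  have hS2pos : 0 < S2 :=
    Finset.sum_pos' (fun i _ => pow_nonneg (hnn i) 2) ⟨j, Finset.mem_univ j, pow_pos hj 2⟩
  have hS3pos : 0 < S3 :=
    Finset.sum_pos' (fun i _ => pow_nonneg (hnn i) 3) ⟨j, Finset.mem_univ j, pow_pos hj 3⟩
  -- key inequalities
  have key1 : S3 ^ 2 ≤ S2 ^ 3 := by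
    -- (Σλ³)² ≤ S2 * Σλ⁴ ≤ S2 * S2²
    have cs : (∑ i, ev i * ev i ^ 2) ^ 2 ≤ (∑ i, ev i ^ 2) * ∑ i, (ev i ^ 2) ^ 2 :=
      Finset.sum_mul_sq_le_sq_mul_sq Finset.univ (fun i => ev i) (fun i => ev i ^ 2)
    have h4 : ∑ i, (ev i ^ 2) ^ 2 ≤ (∑ i, ev i ^ 2) ^ 2 :=
      Finset.sum_sq_le_sq_sum_of_nonneg (fun i _ => by positivity)
    calc S3 ^ 2 = (∑ i, ev i * ev i ^ 2) ^ 2 := by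
          rw [hS3]; congr 1; exact Finset.sum_congr rfl fun i _ => by ring
      _ ≤ (∑ i, ev i ^ 2) * ∑ i, (ev i ^ 2) ^ 2 := cs
      _ ≤ S2 * S2 ^ 2 := by
          exact mul_le_mul_of_nonneg_left h4 hS2pos.le
      _ = S2 ^ 3 := by ring
  have key2 : S2 ^ 2 ≤ S1 * S3 := by
    have cs : (∑ i, Real.sqrt (ev i) * (Real.sqrt (ev i) * ev i)) ^ 2
        ≤ (∑ i, Real.sqrt (ev i) ^ 2) * ∑ i, (Real.sqrt (ev i) * ev i) ^ 2 :=
      Finset.sum_mul_sq_le_sq_mul_sq Finset.univ _ _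
    have e1 : ∀ i, Real.sqrt (ev i) * (Real.sqrt (ev i) * ev i) = ev i ^ 2 := fun i => by
      rw [← mul_assoc, Real.mul_self_sqrt (hnn i)]; ring
    have e2 : ∀ i, Real.sqrt (ev i) ^ 2 = ev i := fun i => Real.sq_sqrt (hnn i)
    have e3 : ∀ i, (Real.sqrt (ev i) * ev i) ^ 2 = ev i ^ 3 := fun i => by
      rw [mul_pow, Real.sq_sqrt (hnn i)]; ring
    calc S2 ^ 2 = (∑ i, Real.sqrt (ev i) * (Real.sqrt (ev i) * ev i)) ^ 2 := by
          rw [hS2]; congr 1; exact Finset.sum_congr rfl fun i _ => (e1 i).symm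
      _ ≤ (∑ i, Real.sqrt (ev i) ^ 2) * ∑ i, (Real.sqrt (ev i) * ev i) ^ 2 := cs
      _ = S1 * S3 := by
          rw [hS1, hS3]
          congr 1
          · exact Finset.sum_congr rfl fun i _ => e2 i
          · exact Finset.sum_congr rfl fun i _ => e3 i
  have key3 : S1 ^ 2 ≤ (m : ℝ) * S2 := by
    have := sq_sum_le_card_mul_sum_sq (s := Finset.univ) (f := fun i : Fin m => ev i)
    simpa using this
  rw [hd, htr1, htr2]
  rw [hdstar, htr2, htr3]
  refine ⟨?_, ?_, ?_⟩
  · rw [le_div_iff₀ (by positivity), one_mul]; exact key1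
  · rw [div_le_div_iff₀ (by positivity) hS2pos]
    calc S2 ^ 3 * S2 = (S2 ^ 2) ^ 2 := by ring
      _ ≤ (S1 * S3) ^ 2 := by
          apply pow_le_pow_left₀ (by positivity) key2
      _ = S1 ^ 2 * S3 ^ 2 := by ring
  · rw [div_le_iff₀ hS2pos]; exact key3
end

section
/- For a nonzero positive semidefinite real symmetric m×m matrix Ω, one has trace(Ω)² / trace(Ω²) ≥ trace(Ω²)² / trace(Ω⁴). -/
open Matrix

private lemma trace_pow_eq {m : ℕ} (A : Matrix (Fin m) (Fin m) ℝ) (hA : A.IsHermitian) (k : ℕ) :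
    (A ^ k).trace = ∑ i, hA.eigenvalues i ^ k := by
  set U : Matrix (Fin m) (Fin m) ℝ := (hA.eigenvectorUnitary : Matrix (Fin m) (Fin m) ℝ) with hUdef
  have hU : star U * U = 1 := (Matrix.mem_unitaryGroup_iff').mp hA.eigenvectorUnitary.2
  have hU' : U * star U = 1 := (Matrix.mem_unitaryGroup_iff).mp hA.eigenvectorUnitary.2
  set D : Matrix (Fin m) (Fin m) ℝ := diagonal (RCLike.ofReal ∘ hA.eigenvalues) with hDdef
  have hspec : A = U * D * star U := hA.spectral_theorem
  have hpow : A ^ k = U * D ^ k * star U := by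
    induction k with
    | zero => rw [pow_zero, pow_zero, mul_one, hU']
    | succ n ih =>
      rw [pow_succ, ih, hspec, pow_succ]
      rw [show U * D ^ n * star U * (U * D * star U)
          = U * D ^ n * (star U * U) * (D * star U) by
        simp only [Matrix.mul_assoc]]
      rw [hU, mul_one, Matrix.mul_assoc, Matrix.mul_assoc, Matrix.mul_assoc]
  rw [hpow, Matrix.trace_mul_comm, ← Matrix.mul_assoc, hU, Matrix.one_mul,
    Matrix.diagonal_pow, Matrix.trace_diagonal]
  simp [RCLike.ofReal]

/-- For a nonzero positive semidefinite real symmetric `m × m` matrix `Ω`,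
`trace(Ω)² / trace(Ω²) ≥ trace(Ω²)² / trace(Ω⁴)`. -/
theorem stmt_6 {m : ℕ} (Ω : Matrix (Fin m) (Fin m) ℝ) (hΩ : Ω.PosSemidef) (hne : Ω ≠ 0) :
    ((Ω ^ 2).trace) ^ 2 / (Ω ^ 4).trace ≤ (Ω.trace) ^ 2 / (Ω ^ 2).trace := by
  have hA := hΩ.1
  set μ := hA.eigenvalues with hμ
  have hnn : ∀ i, 0 ≤ μ i := hΩ.eigenvalues_nonneg
  have h1 : Ω.trace = ∑ i, μ i := by
    have := trace_pow_eq Ω hA 1; simpa using this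
  have h2 : (Ω ^ 2).trace = ∑ i, μ i ^ 2 := trace_pow_eq Ω hA 2
  have h4 : (Ω ^ 4).trace = ∑ i, μ i ^ 4 := trace_pow_eq Ω hA 4
  -- some eigenvalue is nonzero
  have hex : ∃ i, μ i ≠ 0 := by
    by_contra h
    push_neg at h
    apply hne
    have hz : μ = 0 := funext h
    have hspec := hA.spectral_theorem
    rw [← hμ, hz] at hspec
    have hd : diagonal (RCLike.ofReal ∘ (0 : Fin m → ℝ)) = (0 : Matrix (Fin m) (Fin m) ℝ) := by
      ext i j; simp [Matrix.diagonal]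
    rw [hd, map_zero] at hspec
    exact hspec
  obtain ⟨i₀, hi₀⟩ := hex
  have hs2 : 0 < ∑ i, μ i ^ 2 :=
    Finset.sum_pos' (fun i _ => by positivity) ⟨i₀, Finset.mem_univ _,
      by have := hnn i₀; positivity⟩
  have hs4 : 0 < ∑ i, μ i ^ 4 :=
    Finset.sum_pos' (fun i _ => by positivity) ⟨i₀, Finset.mem_univ _,
      by have := hnn i₀; positivity⟩
  rw [h1, h2, h4, div_le_div_iff₀ hs4 hs2]
  -- Cauchy-Schwarz twice
  have cs1 : (∑ i, μ i ^ 2) ^ 2 ≤ (∑ i, μ i) * (∑ i, μ i ^ 3) :=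
    Finset.sum_sq_le_sum_mul_sum_of_sq_eq_mul Finset.univ
      (fun i _ => hnn i) (fun i _ => by have := hnn i; positivity)
      (fun i _ => by ring)
  have cs2 : (∑ i, μ i ^ 3) ^ 2 ≤ (∑ i, μ i ^ 2) * (∑ i, μ i ^ 4) :=
    Finset.sum_sq_le_sum_mul_sum_of_sq_eq_mul Finset.univ
      (fun i _ => by positivity) (fun i _ => by have := hnn i; positivity)
      (fun i _ => by ring)
  have hs3 : 0 ≤ ∑ i, μ i ^ 3 :=
    Finset.sum_nonneg fun i _ => by have := hnn i; positivity
  nlinarith [mul_pos hs2 hs4, sq_nonneg (∑ i, μ i), mul_le_mul cs1 cs1 (sq_nonneg _)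
    (mul_nonneg (Finset.sum_nonneg fun i _ => hnn i) hs3)]
end
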